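/- For any full-support π ∈ Δ_Y and fixed opponent μ, let g(y) = (P^T μ)_y + λ(1 + log(π(y)/τ(y))) be the gradient of the regularized value at π. Then V(π,μ) - V*(μ) ≤ (1/(2λ)) ‖g‖_span², where ‖g‖_span = inf_{c ∈ ℝ} ‖g + c·1‖_∞. -/

import Mathlib

open Finset

/-- Kullback–Leibler divergence between two distributions on a finite set. -/
noncomputable def KL {Y : Type*} [Fintype Y] (p q : Y → ℝ) : ℝ :=
  ∑ y, p y * Real.log (p y / q y)

/-- Span seminorm: `‖g‖_span = inf_c ‖g + c·1‖_∞` (sup norm on functions). -/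
noncomputable def spanNorm {Y : Type*} [Fintype Y] (g : Y → ℝ) : ℝ :=
  ⨅ c : ℝ, ‖(fun y => g y + c : Y → ℝ)‖


noncomputable def kAux (t : ℝ) : ℝ := (t+1) * Real.log t - 2*(t-1)
noncomputable def FAux (t : ℝ) : ℝ := 2*(t+2)*(t * Real.log t - t + 1) - 3*(t-1)^2

lemma kAux_hasDeriv {x : ℝ} (hx : 0 < x) :
    HasDerivAt kAux (Real.log x + x⁻¹ - 1) x := by
  have h1 : HasDerivAt (fun t : ℝ => (t+1) * Real.log t)
      (1 * Real.log x + (x+1) * x⁻¹) x :=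
    ((hasDerivAt_id x).add_const 1).mul (Real.hasDerivAt_log hx.ne')
  have h2 : HasDerivAt (fun t : ℝ => 2*(t-1)) 2 x := by
    simpa using ((hasDerivAt_id x).sub_const 1).const_mul 2
  have := h1.sub h2
  refine HasDerivAt.congr_deriv this ?_
  field_simp
  ring

lemma kAux_mono : MonotoneOn kAux (Set.Ioi 0) := by
  apply monotoneOn_of_deriv_nonneg (convex_Ioi 0)
  · intro x hx
    exact ((kAux_hasDeriv hx).continuousAt).continuousWithinAt
  · intro x hx
    rw [interior_Ioi] at hx
    exact (kAux_hasDeriv hx).differentiableAt.differentiableWithinAt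
  · intro x hx
    rw [interior_Ioi] at hx
    rw [(kAux_hasDeriv hx).deriv]
    have h := Real.log_le_sub_one_of_pos (inv_pos.mpr hx)
    rw [Real.log_inv] at h
    linarith

lemma kAux_one : kAux 1 = 0 := by simp [kAux]

lemma FAux_hasDeriv {x : ℝ} (hx : 0 < x) :
    HasDerivAt FAux (4 * kAux x) x := by
  have hlog : HasDerivAt (fun t : ℝ => t * Real.log t) (Real.log x + 1) x := by
    have := (hasDerivAt_id x).mul (Real.hasDerivAt_log hx.ne')
    refine HasDerivAt.congr_deriv this ?_
    simp [hx.ne']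
  have h1 : HasDerivAt (fun t : ℝ => 2*(t+2)*(t * Real.log t - t + 1))
      (2 * (x * Real.log x - x + 1) + (2*(x+2)) * (Real.log x + 1 - 1)) x := by
    have ha : HasDerivAt (fun t : ℝ => 2*(t+2)) 2 x := by
      simpa using ((hasDerivAt_id x).add_const 2).const_mul 2
    have hb : HasDerivAt (fun t : ℝ => t * Real.log t - t + 1) (Real.log x + 1 - 1) x :=
      (hlog.sub (hasDerivAt_id x)).add_const 1
    exact ha.mul hb
  have h2 : HasDerivAt (fun t : ℝ => 3*(t-1)^2) (3*(2*(x-1))) x := by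
    simpa using (((hasDerivAt_id x).sub_const 1).pow 2).const_mul 3
  have := h1.sub h2
  refine HasDerivAt.congr_deriv this ?_
  simp only [kAux]
  ring

lemma FAux_continuous : Continuous FAux := by
  unfold FAux
  have := Real.continuous_mul_log
  fun_prop

lemma FAux_nonneg {t : ℝ} (ht : 0 ≤ t) : 0 ≤ FAux t := by
  have hF1 : FAux 1 = 0 := by simp [FAux]
  rcases le_or_gt t 1 with h1 | h1
  · -- antitone on [0,1]
    have anti : AntitoneOn FAux (Set.Icc 0 1) := by
      apply antitoneOn_of_deriv_nonpos (convex_Icc 0 1) FAux_continuous.continuousOn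
      · intro x hx
        rw [interior_Icc] at hx
        exact (FAux_hasDeriv hx.1).differentiableAt.differentiableWithinAt
      · intro x hx
        rw [interior_Icc] at hx
        rw [(FAux_hasDeriv hx.1).deriv]
        have : kAux x ≤ kAux 1 := kAux_mono hx.1 (by norm_num) hx.2.le
        rw [kAux_one] at this
        linarith
    have := anti (Set.mem_Icc.mpr ⟨ht, h1⟩) (Set.mem_Icc.mpr ⟨zero_le_one, le_rfl⟩) h1
    rw [hF1] at this; exact this
  · -- monotone on [1,∞)
    have mono : MonotoneOn FAux (Set.Ici 1) := by
      apply monotoneOn_of_deriv_nonneg (convex_Ici 1) FAux_continuous.continuousOn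
      · intro x hx
        rw [interior_Ici] at hx
        exact (FAux_hasDeriv (lt_trans one_pos hx)).differentiableAt.differentiableWithinAt
      · intro x hx
        rw [interior_Ici] at hx
        rw [(FAux_hasDeriv (lt_trans one_pos hx)).deriv]
        have : kAux 1 ≤ kAux x :=
          kAux_mono (by norm_num) (Set.mem_Ioi.mpr (lt_trans one_pos hx)) hx.le
        rw [kAux_one] at this
        linarith
    have := mono (Set.mem_Ici.mpr le_rfl) (Set.mem_Ici.mpr h1.le) h1.le
    rw [hF1] at this; exact this

lemma scalar_ineq {t : ℝ} (ht : 0 ≤ t) :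
    3*(t-1)^2 ≤ 2*(t+2)*(t * Real.log t - t + 1) := by
  have := FAux_nonneg ht
  unfold FAux at this
  linarith

lemma per_coord {a b : ℝ} (ha : 0 ≤ a) (hb : 0 < b) :
    3*(a-b)^2 ≤ 2*(a+2*b)*(a * Real.log (a/b) - a + b) := by
  have ht : 0 ≤ a / b := div_nonneg ha hb.le
  have h := mul_le_mul_of_nonneg_left (scalar_ineq ht) (sq_nonneg b)
  set L := Real.log (a/b) with hL
  have e1 : b^2 * (3*((a/b)-1)^2) = 3*(a-b)^2 := by field_simp
  have e2 : b^2 * (2*((a/b)+2)*((a/b)*L - a/b + 1)) = 2*(a+2*b)*(a*L - a + b) := by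
    field_simp
  rw [e1, e2] at h; exact h

lemma pinsker {Y : Type*} [Fintype Y] (p q : Y → ℝ)
    (hp : ∀ y, 0 ≤ p y) (hq : ∀ y, 0 < q y)
    (hp1 : ∑ y, p y = 1) (hq1 : ∑ y, q y = 1) :
    (∑ y, |p y - q y|) ^ 2 ≤ 2 * ∑ y, p y * Real.log (p y / q y) := by
  have hw : ∀ y ∈ (univ : Finset Y), 0 < (p y + 2 * q y) / 3 := by
    intro y _
    have := hp y; have := hq y; positivity
  have hsed := Finset.sq_sum_div_le_sum_sq_div univ (fun y => |p y - q y|) hw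
  have hwsum : ∑ y, (p y + 2 * q y) / 3 = 1 := by
    rw [← Finset.sum_div, Finset.sum_add_distrib, ← Finset.mul_sum, hp1, hq1]
    norm_num
  rw [hwsum, div_one] at hsed
  have hterm : ∀ y, |p y - q y| ^ 2 / ((p y + 2 * q y) / 3)
      ≤ 2 * (p y * Real.log (p y / q y) - p y + q y) := by
    intro y
    have h := per_coord (hp y) (hq y)
    rw [div_le_iff₀ (by have := hp y; have := hq y; positivity), sq_abs]
    nlinarith [h]
  calc (∑ y, |p y - q y|) ^ 2
      ≤ ∑ y, |p y - q y| ^ 2 / ((p y + 2 * q y) / 3) := hsed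
    _ ≤ ∑ y, 2 * (p y * Real.log (p y / q y) - p y + q y) :=
        Finset.sum_le_sum fun y _ => hterm y
    _ = 2 * ∑ y, p y * Real.log (p y / q y) := by
        rw [← Finset.mul_sum]
        congr 1
        rw [Finset.sum_add_distrib, Finset.sum_sub_distrib, hp1, hq1]
        ring

theorem stmt6 {Y : Type*} [Fintype Y] (P : Y → Y → ℝ)
    (hP0 : ∀ y y', 0 ≤ P y y') (hP1 : ∀ y y', P y y' ≤ 1)
    (hsym : ∀ y y', P y y' + P y' y = 1)
    (lam : ℝ) (hlam : 0 < lam)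
    (τ : Y → ℝ) (hτ : ∀ y, 0 < τ y) (hτ1 : ∑ y, τ y = 1)
    (μ : Y → ℝ) (hμ0 : ∀ y, 0 ≤ μ y) (hμ1 : ∑ y, μ y = 1)
    (π : Y → ℝ) (hπ : ∀ y, 0 < π y) (hπ1 : ∑ y, π y = 1)
    -- gradient of the regularized value at π
    (g : Y → ℝ)
    (hg : ∀ y, g y = (∑ y', P y' y * μ y') + lam * (1 + Real.log (π y / τ y))) :
    ((∑ y, ∑ y', μ y * P y y' * π y') + lam * KL π τ)
      - sInf ((fun π' => (∑ y, ∑ y', μ y * P y y' * π' y') + lam * KL π' τ) ''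
          {p : Y → ℝ | (∀ y, 0 ≤ p y) ∧ ∑ y, p y = 1})
      ≤ (1 / (2 * lam)) * (spanNorm g) ^ 2 := by
  set V : (Y → ℝ) → ℝ :=
    fun π' => (∑ y, ∑ y', μ y * P y y' * π' y') + lam * KL π' τ with hV
  set S : Set ℝ := V '' {p : Y → ℝ | (∀ y, 0 ≤ p y) ∧ ∑ y, p y = 1} with hS
  -- bilinear part rewriting
  have hA : ∀ ρ : Y → ℝ, (∑ y, ∑ y', μ y * P y y' * ρ y')
      = ∑ y, (∑ y', P y' y * μ y') * ρ y := by
    intro ρ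
    rw [Finset.sum_comm]
    exact Finset.sum_congr rfl fun y _ => by
      rw [Finset.sum_mul]
      exact Finset.sum_congr rfl fun y' _ => by ring
  -- key bound for each shift c and each feasible π'
  have key : ∀ c : ℝ, V π - sInf S ≤ (1/(2*lam)) * ‖(fun y => g y + c : Y → ℝ)‖^2 := by
    intro c
    set M : ℝ := ‖(fun y => g y + c : Y → ℝ)‖ with hMdef
    have hM : ∀ y, |g y + c| ≤ M := by
      intro y
      have := norm_le_pi_norm (fun y => g y + c : Y → ℝ) y
      simpa using this
    have hMpos : 0 ≤ M := norm_nonneg _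
    have hptwise : ∀ π' ∈ {p : Y → ℝ | (∀ y, 0 ≤ p y) ∧ ∑ y, p y = 1},
        V π - V π' ≤ (1/(2*lam)) * M^2 := by
      rintro π' ⟨hp'0, hp'1⟩
      have hsum0 : ∑ y, (π y - π' y) = 0 := by
        rw [Finset.sum_sub_distrib, hπ1, hp'1]; ring
      -- log splitting
      have hsplit : ∀ y, π' y * Real.log (π' y / τ y)
          = π' y * Real.log (π' y / π y) + π' y * Real.log (π y / τ y) := by
        intro y
        rcases eq_or_lt_of_le (hp'0 y) with h | h
        · simp [← h]
        · rw [← mul_add, ← Real.log_mul (by have := hπ y; positivity)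
            (by have := hπ y; have := hτ y; positivity)]
          congr 2
          have h1 : π y ≠ 0 := (hπ y).ne'
          have h2 : τ y ≠ 0 := (hτ y).ne'
          field_simp
      have hKL' : KL π' τ = KL π' π + ∑ y, π' y * Real.log (π y / τ y) := by
        unfold KL
        rw [← Finset.sum_add_distrib]
        exact Finset.sum_congr rfl fun y _ => hsplit y
      -- gradient sum identity
      have hgsum : ∑ y, g y * (π y - π' y)
          = (∑ y, (∑ y', P y' y * μ y') * (π y - π' y))
            + lam * ((∑ y, (π y - π' y))
              + ((∑ y, π y * Real.log (π y / τ y))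
                 - ∑ y, π' y * Real.log (π y / τ y))) := by
        have e : ∀ y ∈ (univ : Finset Y), g y * (π y - π' y)
            = (∑ y', P y' y * μ y') * (π y - π' y)
              + lam * ((π y - π' y)
                + (π y * Real.log (π y / τ y) - π' y * Real.log (π y / τ y))) :=
          fun y _ => by rw [hg y]; ring
        rw [Finset.sum_congr rfl e, Finset.sum_add_distrib, ← Finset.mul_sum,
          Finset.sum_add_distrib, Finset.sum_sub_distrib, Finset.sum_sub_distrib]
      have hbil : (∑ y, ∑ y', μ y * P y y' * π y') - (∑ y, ∑ y', μ y * P y y' * π' y')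
          = ∑ y, (∑ y', P y' y * μ y') * (π y - π' y) := by
        rw [hA π, hA π', ← Finset.sum_sub_distrib]
        exact Finset.sum_congr rfl fun y _ => by ring
      -- the main identity
      have hident : V π - V π' = (∑ y, g y * (π y - π' y)) - lam * KL π' π := by
        rw [hV]
        simp only []
        rw [hgsum, hKL', hsum0]
        have : KL π τ = ∑ y, π y * Real.log (π y / τ y) := rfl
        rw [this]
        linarith [hbil]
      -- shift by c
      have hshift : ∑ y, g y * (π y - π' y) = ∑ y, (g y + c) * (π y - π' y) := by
        have : ∀ y ∈ (univ : Finset Y),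
            (g y + c) * (π y - π' y) = g y * (π y - π' y) + c * (π y - π' y) :=
          fun y _ => by ring
        rw [Finset.sum_congr rfl this, Finset.sum_add_distrib, ← Finset.mul_sum,
          hsum0, mul_zero, add_zero]
      set T : ℝ := ∑ y, |π' y - π y| with hT
      have hbnd : ∑ y, (g y + c) * (π y - π' y) ≤ M * T := by
        rw [hT, Finset.mul_sum]
        apply Finset.sum_le_sum
        intro y _
        calc (g y + c) * (π y - π' y) ≤ |(g y + c) * (π y - π' y)| := le_abs_self _
          _ = |g y + c| * |π' y - π y| := by rw [abs_mul, abs_sub_comm]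
          _ ≤ M * |π' y - π y| := mul_le_mul_of_nonneg_right (hM y) (abs_nonneg _)
      have hpin : T^2 ≤ 2 * KL π' π := by
        have := pinsker π' π hp'0 hπ hp'1 hπ1
        exact this
      have hKLnn : 0 ≤ KL π' π := by nlinarith [sq_nonneg T]
      rw [hident]
      have hgoal : (∑ y, g y * (π y - π' y)) - lam * KL π' π ≤ M * T - lam * (T^2/2) := by
        rw [hshift]
        have : lam * (T^2/2) ≤ lam * KL π' π := by
          apply mul_le_mul_of_nonneg_left _ hlam.le
          linarith
        linarith
      have hfinal : M * T - lam * (T^2/2) ≤ (1/(2*lam)) * M^2 := by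
        rw [show (1:ℝ)/(2*lam) * M^2 = M^2/(2*lam) by ring,
          le_div_iff₀ (by positivity)]
        nlinarith [sq_nonneg (lam * T - M)]
      linarith
    -- infimum over the feasible set
    have hSne : S.Nonempty := ⟨V τ, ⟨τ, ⟨fun y => (hτ y).le, hτ1⟩, rfl⟩⟩
    have hlb : V π - (1/(2*lam)) * M^2 ≤ sInf S := by
      apply le_csInf hSne
      rintro x ⟨π', hπ', rfl⟩
      have := hptwise π' hπ'
      linarith
    linarith
  -- pass to the infimum over c
  set N : ℝ → ℝ := fun c => ‖(fun y => g y + c : Y → ℝ)‖ with hN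
  have hbdd : BddBelow (Set.range N) := ⟨0, by rintro _ ⟨c, rfl⟩; exact norm_nonneg _⟩
  have hspan0 : 0 ≤ spanNorm g := le_ciInf fun c => norm_nonneg _
  set f : ℝ → ℝ := fun x => (1/(2*lam)) * (max x 0)^2 with hf
  have hfmono : Monotone f := by
    intro a b hab
    have h1 : max a 0 ≤ max b 0 := max_le_max hab le_rfl
    have h2 : (0:ℝ) ≤ max a 0 := le_max_right _ _
    have : (max a 0)^2 ≤ (max b 0)^2 := pow_le_pow_left₀ h2 h1 2
    apply mul_le_mul_of_nonneg_left this
    positivity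
  have hfcont : Continuous f := by
    apply continuous_const.mul
    exact (continuous_id.max continuous_const).pow 2
  have hmap : f (⨅ c, N c) = ⨅ c, f (N c) :=
    hfmono.map_ciInf_of_continuousAt hfcont.continuousAt hbdd
  have hle : V π - sInf S ≤ ⨅ c, f (N c) := by
    apply le_ciInf
    intro c
    have := key c
    have heq : f (N c) = (1/(2*lam)) * (N c)^2 := by
      rw [hf]
      simp only []
      rw [max_eq_left (norm_nonneg _)]
    rw [heq]
    exact this
  have hspan : spanNorm g = ⨅ c, N c := rfl
  have hfspan : f (spanNorm g) = (1/(2*lam)) * (spanNorm g)^2 := by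
    rw [hf]
    simp only []
    rw [max_eq_left hspan0]
  calc V π - sInf S ≤ ⨅ c, f (N c) := hle
    _ = f (spanNorm g) := by rw [← hmap, hspan]
    _ = (1/(2*lam)) * (spanNorm g)^2 := hfspan
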